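/- Let n and k be positive integers, z a k-coloring of {1,…,n}, and K a field. Then the toric ideal I_{DC_{n,z}} = ker φ_β equals the ideal I_{M_{n,z}} of K[x_e : e ∈ P] generated by the binomials x^{γ⁺} − x^{γ⁻} with γ ∈ M_{n,z}. -/

import Mathlib

open Finset

/-- The set `P` of 2-element subsets of `{1,…,n}`, encoded as ordered pairs. -/
abbrev Edge (n : ℕ) : Type := {p : Fin n × Fin n // p.1 < p.2}

/-- Entry `γ_{uv}` of a vector `γ ∈ ℤ^P` at the unordered pair `{u,v}` (0 when `u = v`). -/
def ent {n : ℕ} (γ : Edge n → ℤ) (u v : Fin n) : ℤ :=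
  if h : u < v then γ ⟨(u, v), h⟩ else if h : v < u then γ ⟨(v, u), h⟩ else 0

/-- Entry at `{u,v}` of a vector in `ℕ^P`. -/
def entN {n : ℕ} (x : Edge n → ℕ) (u v : Fin n) : ℕ :=
  if h : u < v then x ⟨(u, v), h⟩ else if h : v < u then x ⟨(v, u), h⟩ else 0

/-- Degree sequence: `d(γ)_u = ∑_{v ≠ u} γ_{uv}`. -/
def degSeq {n : ℕ} (γ : Edge n → ℤ) (u : Fin n) : ℤ := ∑ v, ent γ u v

/-- Color sequence: `c(γ)_{ij} = ∑ γ_{uv}` over `{u,v} ∈ P` with `{z u, z v} = {i,j}`. -/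
def colorSeq {n k : ℕ} (z : Fin n → Fin k) (γ : Edge n → ℤ) (i j : Fin k) : ℤ :=
  ∑ e : Edge n,
    if (z e.1.1 = i ∧ z e.1.2 = j) ∨ (z e.1.1 = j ∧ z e.1.2 = i) then γ e else 0

/-- `γ ∈ ker_ℤ DC_{n,z}`: both the degree sequence and the color sequence vanish. -/
def inKer {n k : ℕ} (z : Fin n → Fin k) (γ : Edge n → ℤ) : Prop :=
  (∀ u, degSeq γ u = 0) ∧ ∀ i j, colorSeq z γ i j = 0

/-- The 1-norm `‖γ‖₁ = ∑_{e ∈ P} |γ_e|`. -/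
def norm1 {n : ℕ} (γ : Edge n → ℤ) : ℤ := ∑ e, |γ e|

/-- The set of moves `M_{n,z} = {γ ∈ ker_ℤ DC_{n,z} : ‖γ‖₁ = 4}`. -/
def MSet {n k : ℕ} (z : Fin n → Fin k) : Set (Edge n → ℤ) :=
  {γ | inKer z γ ∧ norm1 γ = 4}

/-- Degree sequence of a vector in `ℕ^P`. -/
def degSeqN {n : ℕ} (x : Edge n → ℕ) (u : Fin n) : ℕ := ∑ v, entN x u v

/-- Color sequence of a vector in `ℕ^P`. -/
def colorSeqN {n k : ℕ} (z : Fin n → Fin k) (x : Edge n → ℕ) (i j : Fin k) : ℕ :=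
  ∑ e : Edge n,
    if (z e.1.1 = i ∧ z e.1.2 = j) ∨ (z e.1.1 = j ∧ z e.1.2 = i) then x e else 0

/-- The fiber `F(b) = {x ∈ ℕ^P : DC_{n,z} x = b}`, where `b = (d; c)`. -/
def Fiber {n k : ℕ} (z : Fin n → Fin k) (d : Fin n → ℤ) (c : Fin k → Fin k → ℤ) :
    Set (Edge n → ℕ) :=
  {x | (∀ u, (degSeqN x u : ℤ) = d u) ∧ ∀ i j, (colorSeqN z x i j : ℤ) = c i j}

/-- The simple fiber `F̃(b) = F(b) ∩ {0,1}^P`. -/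
def SimpleFiber {n k : ℕ} (z : Fin n → Fin k) (d : Fin n → ℤ) (c : Fin k → Fin k → ℤ) :
    Set (Edge n → ℕ) :=
  {x | x ∈ Fiber z d c ∧ ∀ e, x e ≤ 1}

/-- The difference `x − x' ∈ ℤ^P` of two vectors in `ℕ^P`. -/
def diff {n : ℕ} (x x' : Edge n → ℕ) : Edge n → ℤ := fun e => (x e : ℤ) - (x' e : ℤ)

/-- The monomial map `φ_β : x_{uv} ↦ s_u s_v t_{z(u)z(v)}` defining the toric ideal. -/
noncomputable def phiBeta (K : Type*) [Field K] {n k : ℕ} (z : Fin n → Fin k) :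
    MvPolynomial (Edge n) K →ₐ[K] MvPolynomial (Fin n ⊕ Fin k × Fin k) K :=
  MvPolynomial.aeval fun e =>
    MvPolynomial.X (Sum.inl e.1.1) * MvPolynomial.X (Sum.inl e.1.2) *
      MvPolynomial.X (Sum.inr (min (z e.1.1) (z e.1.2), max (z e.1.1) (z e.1.2)))

/-- The exponent vector `γ⁺ = max(γ, 0)`. -/
noncomputable def expPos {n : ℕ} (γ : Edge n → ℤ) : Edge n →₀ ℕ :=
  Finsupp.equivFunOnFinite.symm fun e => (γ e).toNat

/-- The exponent vector `γ⁻ = max(−γ, 0)`. -/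
noncomputable def expNeg {n : ℕ} (γ : Edge n → ℤ) : Edge n →₀ ℕ :=
  Finsupp.equivFunOnFinite.symm fun e => (-γ e).toNat

/-- The binomial `x^{γ⁺} − x^{γ⁻}` associated to `γ ∈ ℤ^P`. -/
noncomputable def binom (K : Type*) [Field K] {n : ℕ} (γ : Edge n → ℤ) :
    MvPolynomial (Edge n) K :=
  MvPolynomial.monomial (expPos γ) (1 : K) - MvPolynomial.monomial (expNeg γ) (1 : K)

/-- The variable `x_{ab}` for an unordered pair `{a,b}` with `a ≠ b`. -/
noncomputable def edgeVar (K : Type*) [Field K] {n : ℕ} (a b : Fin n) :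
    MvPolynomial (Edge n) K :=
  if h : a < b then MvPolynomial.X ⟨(a, b), h⟩
  else if h : b < a then MvPolynomial.X ⟨(b, a), h⟩ else 1


section Basic
variable {n k : ℕ}

/-- canonical edge for an unordered pair of distinct vertices -/
def ed (p q : Fin n) (h : p ≠ q) : Edge n :=
  if hpq : p < q then ⟨(p, q), hpq⟩ else ⟨(q, p), lt_of_le_of_ne (not_lt.mp hpq) (Ne.symm h)⟩

/-- indicator vector of an edge -/
def chi (p q : Fin n) (h : p ≠ q) : Edge n → ℕ := fun e => if e = ed p q h then 1 else 0

lemma entN_ed {x : Edge n → ℕ} {u v : Fin n} (h : u ≠ v) : entN x u v = x (ed u v h) := by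
  unfold entN ed
  rcases lt_trichotomy u v with hc | hc | hc
  · simp [hc, hc.not_gt]
  · exact absurd hc h
  · simp [hc, hc.not_gt]

lemma entN_symm (x : Edge n → ℕ) (u v : Fin n) : entN x u v = entN x v u := by
  unfold entN
  rcases lt_trichotomy u v with hc | hc | hc
  · simp [hc, hc.not_gt]
  · simp [hc, lt_irrefl]
  · simp [hc, hc.not_gt]

lemma entN_self (x : Edge n → ℕ) (u : Fin n) : entN x u u = 0 := by
  unfold entN; simp

lemma entN_chi {p q : Fin n} (h : p ≠ q) (u v : Fin n) :
    entN (chi p q h) u v = if (u = p ∧ v = q) ∨ (u = q ∧ v = p) then 1 else 0 := by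
  by_cases huv : u = v
  · subst huv
    rw [entN_self]
    have : ¬ ((u = p ∧ u = q) ∨ (u = q ∧ u = p)) := by
      rintro (⟨h1, h2⟩ | ⟨h1, h2⟩) <;> exact h (h1 ▸ h2 ▸ rfl)
    simp [this]
  · rw [entN_ed huv]
    unfold chi
    congr 1
    unfold ed
    split_ifs with h1 h2 h2 <;>
      simp only [Subtype.ext_iff, Prod.ext_iff, eq_iff_iff] <;> constructor <;>
      rintro (⟨rfl, rfl⟩ | ⟨rfl, rfl⟩) <;> first
        | exact Or.inl ⟨rfl, rfl⟩
        | exact Or.inr ⟨rfl, rfl⟩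
        | exact absurd h1 (by omega)
        | exact absurd h2 (by omega)
        | omega
end Basic

section Basic2
variable {n k : ℕ}

lemma chi_ed {p q : Fin n} (h : p ≠ q) {u v : Fin n} (huv : u ≠ v) :
    chi p q h (ed u v huv) = if (u = p ∧ v = q) ∨ (u = q ∧ v = p) then 1 else 0 := by
  have h1 := entN_ed (x := chi p q h) huv
  rw [← h1, entN_chi]

lemma ed_eq_iff {p q u v : Fin n} (h : p ≠ q) (huv : u ≠ v) :
    ed u v huv = ed p q h ↔ (u = p ∧ v = q) ∨ (u = q ∧ v = p) := by
  have := chi_ed h huv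
  unfold chi at this
  by_cases hc : ed u v huv = ed p q h <;> by_cases hd : (u = p ∧ v = q) ∨ (u = q ∧ v = p) <;>
    simp [hc, hd] at this ⊢

lemma ed_self (e : Edge n) : ed e.1.1 e.1.2 (ne_of_lt e.2) = e := by
  unfold ed
  simp only [e.2, dif_pos]

lemma entN_edge (x : Edge n → ℕ) (e : Edge n) : entN x e.1.1 e.1.2 = x e := by
  rw [entN_ed (ne_of_lt e.2), ed_self]

lemma sum_chi {p q : Fin n} (h : p ≠ q) : ∑ e : Edge n, chi p q h e = 1 := by
  unfold chi
  simp

lemma entN_add (f g : Edge n → ℕ) (u v : Fin n) :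
    entN (fun e => f e + g e) u v = entN f u v + entN g u v := by
  unfold entN; split_ifs <;> simp

lemma degSeqN_add (f g : Edge n → ℕ) (u : Fin n) :
    degSeqN (fun e => f e + g e) u = degSeqN f u + degSeqN g u := by
  unfold degSeqN
  rw [← Finset.sum_add_distrib]
  exact Finset.sum_congr rfl fun v _ => entN_add f g u v

lemma colorSeqN_add (z : Fin n → Fin k) (f g : Edge n → ℕ) (i j : Fin k) :
    colorSeqN z (fun e => f e + g e) i j = colorSeqN z f i j + colorSeqN z g i j := by
  unfold colorSeqN
  rw [← Finset.sum_add_distrib]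
  exact Finset.sum_congr rfl fun e _ => by split_ifs <;> simp

lemma sum_add_fn (f g : Edge n → ℕ) :
    ∑ e : Edge n, (f e + g e) = ∑ e : Edge n, f e + ∑ e : Edge n, g e :=
  Finset.sum_add_distrib

lemma degSeqN_chi {p q : Fin n} (h : p ≠ q) (u : Fin n) :
    degSeqN (chi p q h) u = (if u = p then 1 else 0) + (if u = q then 1 else 0) := by
  unfold degSeqN
  have : ∀ v, entN (chi p q h) u v =
      (if u = p ∧ v = q then 1 else 0) + (if u = q ∧ v = p then 1 else 0) := by
    intro v
    rw [entN_chi]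
    by_cases h1 : u = p ∧ v = q <;> by_cases h2 : u = q ∧ v = p <;>
      simp [h1, h2] <;> intro hh <;> exact absurd hh (by tauto)
  simp only [this]
  rw [Finset.sum_add_distrib]
  congr 1
  · by_cases hup : u = p <;> simp [hup]
  · by_cases huq : u = q <;> simp [huq]

lemma colorSeqN_chi (z : Fin n → Fin k) {p q : Fin n} (h : p ≠ q) (i j : Fin k) :
    colorSeqN z (chi p q h) i j =
      if (z p = i ∧ z q = j) ∨ (z p = j ∧ z q = i) then 1 else 0 := by
  unfold colorSeqN
  rw [Finset.sum_eq_single (ed p q h)]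
  · have hpq : (z (ed p q h).1.1 = i ∧ z (ed p q h).1.2 = j) ∨
        (z (ed p q h).1.1 = j ∧ z (ed p q h).1.2 = i) ↔
        (z p = i ∧ z q = j) ∨ (z p = j ∧ z q = i) := by
      unfold ed
      split_ifs <;> simp <;> tauto
    unfold chi
    simp only [if_pos rfl]
    split_ifs with h1 h2 h2 <;> first | rfl | (exfalso; rw [hpq] at h1; tauto)
  · intro e _ hne
    unfold chi
    simp [hne]
  · simp
end Basic2

section MonoStuff
variable {n k : ℕ}

/-- The monomial `x^a` for `a : ℕ^P` given as a function. -/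
noncomputable def mono (K : Type*) [Field K] {n : ℕ} (a : Edge n → ℕ) :
    MvPolynomial (Edge n) K :=
  MvPolynomial.monomial (Finsupp.equivFunOnFinite.symm a) 1

/-- The ideal generated by the quadratic binomials. -/
noncomputable def Jdl (K : Type*) [Field K] (n k : ℕ) (z : Fin n → Fin k) :
    Ideal (MvPolynomial (Edge n) K) :=
  Ideal.span {f : MvPolynomial (Edge n) K | ∃ γ ∈ MSet z, f = binom K γ}

lemma symm_add (f g : Edge n → ℕ) :
    Finsupp.equivFunOnFinite.symm (fun e => f e + g e) =
      Finsupp.equivFunOnFinite.symm f + Finsupp.equivFunOnFinite.symm g := by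
  ext e; simp

lemma mono_mul {K : Type*} [Field K] (f g : Edge n → ℕ) :
    mono K f * mono K g = mono K (fun e => f e + g e) := by
  unfold mono
  rw [MvPolynomial.monomial_mul, symm_add, one_mul]

lemma ent_pair (f g : Edge n → ℕ) (u v : Fin n) :
    ent (fun e => (f e : ℤ) - g e) u v = (entN f u v : ℤ) - entN g u v := by
  unfold ent entN; split_ifs <;> simp

end MonoStuff

section OneMove
variable {n k : ℕ} {z : Fin n → Fin k}

lemma chi_self {p q : Fin n} (h : p ≠ q) : chi p q h (ed p q h) = 1 := by
  simp [chi]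

lemma chi_ed_zero {p q u v : Fin n} (h : p ≠ q) (huv : u ≠ v)
    (hn : ¬ ((u = p ∧ v = q) ∨ (u = q ∧ v = p))) : chi p q h (ed u v huv) = 0 := by
  rw [chi_ed]; exact if_neg hn

lemma oneMove (K : Type*) [Field K] (a : Edge n → ℕ)
    (U V W X : Fin n) (hUV : U ≠ V) (hUW : U ≠ W) (hUX : U ≠ X) (hVW : V ≠ W)
    (hVX : V ≠ X) (hWX : W ≠ X)
    (hz : z V = z W) (h1 : 0 < entN a U V) (h2 : 0 < entN a W X) :
    ∃ a' : Edge n → ℕ,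
      (mono K a - mono K a' ∈ Jdl K n k z) ∧ (∀ u, degSeqN a' u = degSeqN a u) ∧
      (∀ i j, colorSeqN z a' i j = colorSeqN z a i j) ∧
      (∑ e, a' e = ∑ e, a e) ∧
      entN a' U W = entN a U W + 1 ∧ entN a' V X = entN a V X + 1 := by
  classical
  set pos : Edge n → ℕ := fun e => chi U V hUV e + chi W X hWX e with hpos
  set neg : Edge n → ℕ := fun e => chi U W hUW e + chi V X hVX e with hneg
  -- pointwise disjointness of pos and neg
  have hdisj : ∀ e, pos e = 0 ∨ neg e = 0 := by
    intro e
    by_cases e1 : e = ed U V hUV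
    · right
      subst e1
      rw [hneg]
      have c1 : chi U W hUW (ed U V hUV) = 0 := chi_ed_zero _ _ (by
        rintro (⟨h1, h2⟩ | ⟨h1, h2⟩) <;> first | exact hUV h1 | exact hUV h1.symm | exact hUV h2 | exact hUV h2.symm | exact hUW h1 | exact hUW h1.symm | exact hUW h2 | exact hUW h2.symm | exact hUX h1 | exact hUX h1.symm | exact hUX h2 | exact hUX h2.symm | exact hVW h1 | exact hVW h1.symm | exact hVW h2 | exact hVW h2.symm | exact hVX h1 | exact hVX h1.symm | exact hVX h2 | exact hVX h2.symm | exact hWX h1 | exact hWX h1.symm | exact hWX h2 | exact hWX h2.symm)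
      have c2 : chi V X hVX (ed U V hUV) = 0 := chi_ed_zero _ _ (by
        rintro (⟨h1, h2⟩ | ⟨h1, h2⟩) <;> first | exact hUV h1 | exact hUV h1.symm | exact hUV h2 | exact hUV h2.symm | exact hUW h1 | exact hUW h1.symm | exact hUW h2 | exact hUW h2.symm | exact hUX h1 | exact hUX h1.symm | exact hUX h2 | exact hUX h2.symm | exact hVW h1 | exact hVW h1.symm | exact hVW h2 | exact hVW h2.symm | exact hVX h1 | exact hVX h1.symm | exact hVX h2 | exact hVX h2.symm | exact hWX h1 | exact hWX h1.symm | exact hWX h2 | exact hWX h2.symm)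
      simp [c1, c2]
    · by_cases e2 : e = ed W X hWX
      · right
        subst e2
        have c1 : chi U W hUW (ed W X hWX) = 0 := chi_ed_zero _ _ (by
          rintro (⟨h1, h2⟩ | ⟨h1, h2⟩) <;> first | exact hUV h1 | exact hUV h1.symm | exact hUV h2 | exact hUV h2.symm | exact hUW h1 | exact hUW h1.symm | exact hUW h2 | exact hUW h2.symm | exact hUX h1 | exact hUX h1.symm | exact hUX h2 | exact hUX h2.symm | exact hVW h1 | exact hVW h1.symm | exact hVW h2 | exact hVW h2.symm | exact hVX h1 | exact hVX h1.symm | exact hVX h2 | exact hVX h2.symm | exact hWX h1 | exact hWX h1.symm | exact hWX h2 | exact hWX h2.symm)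
        have c2 : chi V X hVX (ed W X hWX) = 0 := chi_ed_zero _ _ (by
          rintro (⟨h1, h2⟩ | ⟨h1, h2⟩) <;> first | exact hUV h1 | exact hUV h1.symm | exact hUV h2 | exact hUV h2.symm | exact hUW h1 | exact hUW h1.symm | exact hUW h2 | exact hUW h2.symm | exact hUX h1 | exact hUX h1.symm | exact hUX h2 | exact hUX h2.symm | exact hVW h1 | exact hVW h1.symm | exact hVW h2 | exact hVW h2.symm | exact hVX h1 | exact hVX h1.symm | exact hVX h2 | exact hVX h2.symm | exact hWX h1 | exact hWX h1.symm | exact hWX h2 | exact hWX h2.symm)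
        simp [hneg, c1, c2]
      · left
        simp [hpos, chi, e1, e2]
  have hposle : ∀ e, pos e ≤ a e := by
    intro e
    by_cases e1 : e = ed U V hUV
    · subst e1
      have c2 : chi W X hWX (ed U V hUV) = 0 := chi_ed_zero _ _ (by
        rintro (⟨h1, h2⟩ | ⟨h1, h2⟩) <;> first | exact hUV h1 | exact hUV h1.symm | exact hUV h2 | exact hUV h2.symm | exact hUW h1 | exact hUW h1.symm | exact hUW h2 | exact hUW h2.symm | exact hUX h1 | exact hUX h1.symm | exact hUX h2 | exact hUX h2.symm | exact hVW h1 | exact hVW h1.symm | exact hVW h2 | exact hVW h2.symm | exact hVX h1 | exact hVX h1.symm | exact hVX h2 | exact hVX h2.symm | exact hWX h1 | exact hWX h1.symm | exact hWX h2 | exact hWX h2.symm)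
      have ha : 0 < a (ed U V hUV) := by rwa [entN_ed hUV] at h1
      simp only [hpos, chi_self, c2]
      omega
    · by_cases e2 : e = ed W X hWX
      · subst e2
        have c2 : chi U V hUV (ed W X hWX) = 0 := chi_ed_zero _ _ (by
          rintro (⟨h1, h2⟩ | ⟨h1, h2⟩) <;> first | exact hUV h1 | exact hUV h1.symm | exact hUV h2 | exact hUV h2.symm | exact hUW h1 | exact hUW h1.symm | exact hUW h2 | exact hUW h2.symm | exact hUX h1 | exact hUX h1.symm | exact hUX h2 | exact hUX h2.symm | exact hVW h1 | exact hVW h1.symm | exact hVW h2 | exact hVW h2.symm | exact hVX h1 | exact hVX h1.symm | exact hVX h2 | exact hVX h2.symm | exact hWX h1 | exact hWX h1.symm | exact hWX h2 | exact hWX h2.symm)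
        have ha : 0 < a (ed W X hWX) := by rwa [entN_ed hWX] at h2
        simp only [hpos, chi_self, c2]
        omega
      · simp [hpos, chi, e1, e2]
  set a0 : Edge n → ℕ := fun e => a e - pos e with ha0
  have haeq : (fun e => a0 e + pos e) = a := by
    funext e
    exact Nat.sub_add_cancel (hposle e)
  set a' : Edge n → ℕ := fun e => a0 e + neg e with ha'
  -- degree identity for pos/neg
  have hdegpn : ∀ u, degSeqN pos u = degSeqN neg u := by
    intro u
    rw [hpos, hneg, degSeqN_add, degSeqN_add]
    simp only [degSeqN_chi]
    ring
  have hcolpn : ∀ i j, colorSeqN z pos i j = colorSeqN z neg i j := by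
    intro i j
    rw [hpos, hneg, colorSeqN_add, colorSeqN_add]
    simp only [colorSeqN_chi]
    rw [hz]
  have hsumpn : (∑ e, pos e) = 2 ∧ (∑ e, neg e) = 2 := by
    constructor <;>
      · rw [sum_add_fn]
        rw [sum_chi, sum_chi]
  -- stats of a versus a0
  have hdega : ∀ u, degSeqN a u = degSeqN a0 u + degSeqN pos u := by
    intro u; rw [← degSeqN_add, haeq]
  have hdega' : ∀ u, degSeqN a' u = degSeqN a0 u + degSeqN neg u := by
    intro u; rw [ha', degSeqN_add]
  have hcola : ∀ i j, colorSeqN z a i j = colorSeqN z a0 i j + colorSeqN z pos i j := by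
    intro i j; rw [← colorSeqN_add, haeq]
  have hcola' : ∀ i j, colorSeqN z a' i j = colorSeqN z a0 i j + colorSeqN z neg i j := by
    intro i j; rw [ha', colorSeqN_add]
  -- the move vector
  set mv : Edge n → ℤ := fun e => (pos e : ℤ) - neg e with hmv
  have hMS : mv ∈ MSet z := by
    refine ⟨⟨fun u => ?_, fun i j => ?_⟩, ?_⟩
    · unfold degSeq
      have : ∀ v, ent mv u v = (entN pos u v : ℤ) - entN neg u v := fun v => ent_pair pos neg u v
      simp only [this]
      rw [Finset.sum_sub_distrib]
      rw [← Nat.cast_sum, ← Nat.cast_sum]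
      have := hdegpn u
      unfold degSeqN at this
      rw [this, sub_self]
    · unfold colorSeq
      have : ∀ e : Edge n,
          (if (z e.1.1 = i ∧ z e.1.2 = j) ∨ (z e.1.1 = j ∧ z e.1.2 = i) then mv e else 0)
          = ((if (z e.1.1 = i ∧ z e.1.2 = j) ∨ (z e.1.1 = j ∧ z e.1.2 = i) then pos e else 0 : ℕ) : ℤ)
            - ((if (z e.1.1 = i ∧ z e.1.2 = j) ∨ (z e.1.1 = j ∧ z e.1.2 = i) then neg e else 0 : ℕ) : ℤ) := by
        intro e; split_ifs <;> simp [hmv]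
      simp only [this]
      rw [Finset.sum_sub_distrib, ← Nat.cast_sum, ← Nat.cast_sum]
      have := hcolpn i j
      unfold colorSeqN at this
      rw [this, sub_self]
    · unfold norm1
      have : ∀ e : Edge n, |mv e| = ((pos e + neg e : ℕ) : ℤ) := by
        intro e
        rcases hdisj e with h | h <;> simp [hmv, h]
      simp only [this]
      rw [← Nat.cast_sum, sum_add_fn, hsumpn.1, hsumpn.2]
      rfl
  have hexp : expPos mv = Finsupp.equivFunOnFinite.symm pos := by
    unfold expPos
    congr 1
    funext e
    rcases hdisj e with h | h <;> simp [hmv, h]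
  have hexn : expNeg mv = Finsupp.equivFunOnFinite.symm neg := by
    unfold expNeg
    congr 1
    funext e
    rcases hdisj e with h | h <;> simp [hmv, h]
  have hbin : binom K mv = mono K pos - mono K neg := by
    rw [binom, hexp, hexn]; rfl
  have hmem : mono K a - mono K a' ∈ Jdl K n k z := by
    have : mono K a - mono K a' = mono K a0 * binom K mv := by
      rw [hbin, mul_sub, mono_mul, mono_mul, haeq, ha']
    rw [this]
    exact Ideal.mul_mem_left _ _ (Ideal.subset_span ⟨mv, hMS, rfl⟩)
  refine ⟨a', hmem, ?_, ?_, ?_, ?_, ?_⟩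
  · intro u; rw [hdega' u, hdega u, hdegpn u]
  · intro i j; rw [hcola' i j, hcola i j, hcolpn i j]
  · have h1 : (∑ e, a' e) = (∑ e, a0 e) + ∑ e, neg e := by rw [ha']; exact sum_add_fn _ _
    have h2 : (∑ e, a e) = (∑ e, a0 e) + ∑ e, pos e := by rw [← haeq]; exact sum_add_fn _ _
    rw [h1, h2, hsumpn.1, hsumpn.2]
  · have hn : entN neg U W = 1 := by
      rw [hneg, entN_add, entN_chi, entN_chi, if_pos (Or.inl ⟨rfl, rfl⟩), if_neg ?_]
      · rintro (⟨h1, h2⟩ | ⟨h1, h2⟩) <;> first | exact hUV h1 | exact hUV h1.symm | exact hUV h2 | exact hUV h2.symm | exact hUW h1 | exact hUW h1.symm | exact hUW h2 | exact hUW h2.symm | exact hUX h1 | exact hUX h1.symm | exact hUX h2 | exact hUX h2.symm | exact hVW h1 | exact hVW h1.symm | exact hVW h2 | exact hVW h2.symm | exact hVX h1 | exact hVX h1.symm | exact hVX h2 | exact hVX h2.symm | exact hWX h1 | exact hWX h1.symm | exact hWX h2 | exact hWX h2.symm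
    have hp : entN pos U W = 0 := by
      rw [hpos, entN_add, entN_chi, entN_chi, if_neg ?_, if_neg ?_]
      · rintro (⟨h1, h2⟩ | ⟨h1, h2⟩) <;> first | exact hUV h1 | exact hUV h1.symm | exact hUV h2 | exact hUV h2.symm | exact hUW h1 | exact hUW h1.symm | exact hUW h2 | exact hUW h2.symm | exact hUX h1 | exact hUX h1.symm | exact hUX h2 | exact hUX h2.symm | exact hVW h1 | exact hVW h1.symm | exact hVW h2 | exact hVW h2.symm | exact hVX h1 | exact hVX h1.symm | exact hVX h2 | exact hVX h2.symm | exact hWX h1 | exact hWX h1.symm | exact hWX h2 | exact hWX h2.symm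
      · rintro (⟨h1, h2⟩ | ⟨h1, h2⟩) <;> first | exact hUV h1 | exact hUV h1.symm | exact hUV h2 | exact hUV h2.symm | exact hUW h1 | exact hUW h1.symm | exact hUW h2 | exact hUW h2.symm | exact hUX h1 | exact hUX h1.symm | exact hUX h2 | exact hUX h2.symm | exact hVW h1 | exact hVW h1.symm | exact hVW h2 | exact hVW h2.symm | exact hVX h1 | exact hVX h1.symm | exact hVX h2 | exact hVX h2.symm | exact hWX h1 | exact hWX h1.symm | exact hWX h2 | exact hWX h2.symm
    have e1 : entN a' U W = entN a0 U W + entN neg U W := by rw [ha']; exact entN_add _ _ _ _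
    have e2 : entN a U W = entN a0 U W + entN pos U W := by rw [← haeq]; exact entN_add _ _ _ _
    omega
  · have hn : entN neg V X = 1 := by
      rw [hneg, entN_add, entN_chi, entN_chi, if_neg ?_, if_pos (Or.inl ⟨rfl, rfl⟩)]
      · rintro (⟨h1, h2⟩ | ⟨h1, h2⟩) <;> first | exact hUV h1 | exact hUV h1.symm | exact hUV h2 | exact hUV h2.symm | exact hUW h1 | exact hUW h1.symm | exact hUW h2 | exact hUW h2.symm | exact hUX h1 | exact hUX h1.symm | exact hUX h2 | exact hUX h2.symm | exact hVW h1 | exact hVW h1.symm | exact hVW h2 | exact hVW h2.symm | exact hVX h1 | exact hVX h1.symm | exact hVX h2 | exact hVX h2.symm | exact hWX h1 | exact hWX h1.symm | exact hWX h2 | exact hWX h2.symm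
    have hp : entN pos V X = 0 := by
      rw [hpos, entN_add, entN_chi, entN_chi, if_neg ?_, if_neg ?_]
      · rintro (⟨h1, h2⟩ | ⟨h1, h2⟩) <;> first | exact hUV h1 | exact hUV h1.symm | exact hUV h2 | exact hUV h2.symm | exact hUW h1 | exact hUW h1.symm | exact hUW h2 | exact hUW h2.symm | exact hUX h1 | exact hUX h1.symm | exact hUX h2 | exact hUX h2.symm | exact hVW h1 | exact hVW h1.symm | exact hVW h2 | exact hVW h2.symm | exact hVX h1 | exact hVX h1.symm | exact hVX h2 | exact hVX h2.symm | exact hWX h1 | exact hWX h1.symm | exact hWX h2 | exact hWX h2.symm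
      · rintro (⟨h1, h2⟩ | ⟨h1, h2⟩) <;> first | exact hUV h1 | exact hUV h1.symm | exact hUV h2 | exact hUV h2.symm | exact hUW h1 | exact hUW h1.symm | exact hUW h2 | exact hUW h2.symm | exact hUX h1 | exact hUX h1.symm | exact hUX h2 | exact hUX h2.symm | exact hVW h1 | exact hVW h1.symm | exact hVW h2 | exact hVW h2.symm | exact hVX h1 | exact hVX h1.symm | exact hVX h2 | exact hVX h2.symm | exact hWX h1 | exact hWX h1.symm | exact hWX h2 | exact hWX h2.symm
    have e1 : entN a' V X = entN a0 V X + entN neg V X := by rw [ha']; exact entN_add _ _ _ _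
    have e2 : entN a V X = entN a0 V X + entN pos V X := by rw [← haeq]; exact entN_add _ _ _ _
    omega

end OneMove

section Exist
variable {n k : ℕ} {z : Fin n → Fin k}

lemma entN_pos_ne {x : Edge n → ℕ} {u v : Fin n} (h : 0 < entN x u v) : u ≠ v := by
  intro he; subst he; rw [entN_self] at h; exact absurd h (lt_irrefl 0)

lemma degSeqN_pos {x : Edge n → ℕ} {u v : Fin n} (h : 0 < entN x u v) :
    0 < degSeqN x u :=
  lt_of_lt_of_le h (Finset.single_le_sum (f := fun w => entN x u w)
    (fun _ _ => Nat.zero_le _) (Finset.mem_univ v))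

lemma exists_nbr {x : Edge n → ℕ} {u : Fin n} (h : 0 < degSeqN x u) :
    ∃ v, v ≠ u ∧ 0 < entN x u v := by
  by_contra hcon
  push_neg at hcon
  have : degSeqN x u = 0 := by
    apply Finset.sum_eq_zero
    intro v _
    by_cases hv : v = u
    · subst hv; exact entN_self x v
    · exact Nat.le_zero.mp (hcon v hv)
  omega

lemma colorSeqN_pos {x : Edge n → ℕ} {u v : Fin n} (h : 0 < entN x u v) :
    0 < colorSeqN z x (z u) (z v) := by
  have huv : u ≠ v := entN_pos_ne h
  have hx : 0 < x (ed u v huv) := by rwa [entN_ed huv] at h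
  have hcond : (z (ed u v huv).1.1 = z u ∧ z (ed u v huv).1.2 = z v) ∨
      (z (ed u v huv).1.1 = z v ∧ z (ed u v huv).1.2 = z u) := by
    unfold ed; split_ifs <;> simp
  refine lt_of_lt_of_le ?_ (Finset.single_le_sum (f := fun e : Edge n =>
    if (z e.1.1 = z u ∧ z e.1.2 = z v) ∨ (z e.1.1 = z v ∧ z e.1.2 = z u) then x e else 0)
    (fun _ _ => Nat.zero_le _) (Finset.mem_univ (ed u v huv)))
  rw [if_pos hcond]
  exact hx

lemma exists_colored_edge {x : Edge n → ℕ} {i j : Fin k} (h : 0 < colorSeqN z x i j) :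
    ∃ u v, u ≠ v ∧ 0 < entN x u v ∧ z u = i ∧ z v = j := by
  have h' : (∑ e : Edge n, if (z e.1.1 = i ∧ z e.1.2 = j) ∨ (z e.1.1 = j ∧ z e.1.2 = i)
      then x e else 0) ≠ 0 := by unfold colorSeqN at h; omega
  have := Finset.exists_ne_zero_of_sum_ne_zero h'
  obtain ⟨e, -, he⟩ := this
  by_cases hcond : (z e.1.1 = i ∧ z e.1.2 = j) ∨ (z e.1.1 = j ∧ z e.1.2 = i)
  · rw [if_pos hcond] at he
    rcases hcond with ⟨hi, hj⟩ | ⟨hj, hi⟩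
    · exact ⟨e.1.1, e.1.2, ne_of_lt e.2, by rw [entN_edge]; omega, hi, hj⟩
    · refine ⟨e.1.2, e.1.1, (ne_of_lt e.2).symm, ?_, hi, hj⟩
      rw [entN_symm, entN_edge]; omega
  · rw [if_neg hcond] at he; exact absurd rfl he

end Exist

section Cases
variable {n k : ℕ} {z : Fin n → Fin k}

lemma case1 (K : Type*) [Field K] (a b : Edge n → ℕ)
    (hd : ∀ u, degSeqN a u = degSeqN b u)
    (hdis : ∀ u v, entN a u v = 0 ∨ entN b u v = 0)
    (u v w : Fin n) (hav : 0 < entN a u v) (hbw : 0 < entN b u w) (hzz : z v = z w) :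
    ∃ a' b', (mono K a - mono K a' ∈ Jdl K n k z) ∧ (mono K b - mono K b' ∈ Jdl K n k z) ∧
      (∀ p, degSeqN a' p = degSeqN a p) ∧ (∀ i j, colorSeqN z a' i j = colorSeqN z a i j) ∧
      (∀ p, degSeqN b' p = degSeqN b p) ∧ (∀ i j, colorSeqN z b' i j = colorSeqN z b i j) ∧
      ((∑ e, a' e) + (∑ e, b' e) = (∑ e, a e) + (∑ e, b e)) ∧
      (∃ p q, 0 < entN a' p q ∧ 0 < entN b' p q) := by
  have huv : u ≠ v := entN_pos_ne hav
  have huw : u ≠ w := entN_pos_ne hbw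
  have hvw : v ≠ w := by
    intro h
    rw [← h] at hbw
    rcases hdis u v with hh | hh <;> omega
  have hdbw : 0 < degSeqN a w := by
    rw [hd w]
    exact degSeqN_pos (by rwa [entN_symm] at hbw)
  obtain ⟨y, hyw, hay⟩ := exists_nbr hdbw
  have hyu : y ≠ u := by
    intro h
    rw [h] at hay
    have hbw' : 0 < entN b w u := by rwa [entN_symm] at hbw
    rcases hdis w u with hh | hh <;> omega
  by_cases hyv : y = v
  · -- move on b
    subst hyv
    have hdav : 0 < degSeqN b y := by
      rw [← hd y]
      exact degSeqN_pos (by rwa [entN_symm] at hav)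
    obtain ⟨y', hy'v, hby'⟩ := exists_nbr hdav
    have hy'u : y' ≠ u := by
      intro h
      have : 0 < entN b u y := by rw [← h, entN_symm]; exact hby'
      rcases hdis u y with hh | hh <;> omega
    have hy'w : y' ≠ w := by
      intro h
      have : 0 < entN b w y := by rw [← h, entN_symm]; exact hby'
      rcases hdis w y with hh | hh <;> omega
    obtain ⟨b', hmem, hdb, hcb, hsb, hent1, hent2⟩ :=
      oneMove (z := z) K b u w y y' huw huv (Ne.symm hy'u) (Ne.symm hyw) (Ne.symm hy'w)
        (Ne.symm hy'v) hzz.symm hbw hby'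
    refine ⟨a, b', by simp [Jdl, Ideal.zero_mem], hmem, fun _ => rfl, fun _ _ => rfl,
      hdb, hcb, by omega, u, y, hav, by omega⟩
  · -- move on a
    obtain ⟨a', hmem, hda, hca, hsa, hent1, hent2⟩ :=
      oneMove (z := z) K a u v w y huv huw (Ne.symm hyu) hvw (Ne.symm hyv) (Ne.symm hyw)
        hzz hav hay
    refine ⟨a', b, hmem, by simp [Jdl, Ideal.zero_mem], hda, hca, fun _ => rfl,
      fun _ _ => rfl, by omega, u, w, by omega, hbw⟩

lemma case2 (K : Type*) [Field K] (a b : Edge n → ℕ)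
    (hd : ∀ u, degSeqN a u = degSeqN b u)
    (hc : ∀ i j, colorSeqN z a i j = colorSeqN z b i j)
    (hdis : ∀ u v, entN a u v = 0 ∨ entN b u v = 0)
    (hno : ∀ u v w, 0 < entN a u v → 0 < entN b u w → z v ≠ z w)
    (U V : Fin n) (hav : 0 < entN a U V) :
    ∃ a' b', (mono K a - mono K a' ∈ Jdl K n k z) ∧ (mono K b - mono K b' ∈ Jdl K n k z) ∧
      (∀ p, degSeqN a' p = degSeqN a p) ∧ (∀ i j, colorSeqN z a' i j = colorSeqN z a i j) ∧
      (∀ p, degSeqN b' p = degSeqN b p) ∧ (∀ i j, colorSeqN z b' i j = colorSeqN z b i j) ∧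
      ((∑ e, a' e) + (∑ e, b' e) = (∑ e, a e) + (∑ e, b e)) ∧
      (∃ p q r, 0 < entN a' p q ∧ 0 < entN b' p r ∧ z q = z r) := by
  have hUV : U ≠ V := entN_pos_ne hav
  have havs : 0 < entN a V U := by rwa [entN_symm] at hav
  have hdbV : 0 < degSeqN b V := by rw [← hd V]; exact degSeqN_pos havs
  obtain ⟨b1, hb1V, hbb1⟩ := exists_nbr hdbV
  have hb1U : b1 ≠ U := by
    intro h; subst h
    rcases hdis V b1 with h | h <;> omega
  have hcolb : 0 < colorSeqN z b (z V) (z b1) := colorSeqN_pos hbb1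
  have hcola : 0 < colorSeqN z a (z V) (z b1) := by rw [hc]; exact hcolb
  obtain ⟨W, X, hWX, haWX, hzW, hzX⟩ := exists_colored_edge hcola
  by_cases hWU : W = U
  · -- move on b
    subst hWU
    have haUX : 0 < entN a W X := haWX
    have hdbU : 0 < degSeqN b W := by rw [← hd W]; exact degSeqN_pos hav
    obtain ⟨y, hyU, hbUy⟩ := exists_nbr hdbU
    have hyV : y ≠ V := by
      intro h; subst h
      rcases hdis W y with h | h <;> omega
    have hzyX : z y ≠ z X := fun h => hno W X y haUX hbUy h.symm
    have hzyV : z y ≠ z V := fun h => hno W V y hav hbUy h.symm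
    have hyb1 : y ≠ b1 := by
      intro h; subst h
      exact hzyX (hzX.symm ▸ rfl)
    have hWb1 : W ≠ b1 := Ne.symm hb1U
    have hVb1 : V ≠ b1 := Ne.symm hb1V
    obtain ⟨b', hmem, hdb, hcb, hsb, hent1, hent2⟩ :=
      oneMove (z := z) K b y W V b1 hyU hyV hyb1 hUV hWb1 hVb1
        hzW (by rwa [entN_symm] at hbUy) hbb1
    refine ⟨a, b', by simp [Jdl, Ideal.zero_mem], hmem, fun _ => rfl, fun _ _ => rfl,
      hdb, hcb, by omega, W, X, b1, haUX, by omega, hzX⟩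
  · -- move on a
    have hVW' : V ≠ W := by
      intro h
      exact hno V X b1 (h ▸ haWX) hbb1 hzX
    have hVX' : V ≠ X := by
      intro h
      have h1 : 0 < entN a V W := by
        rw [entN_symm]
        rwa [← h] at haWX
      exact hno V W b1 h1 hbb1 (hzW.trans (h ▸ hzX : z V = z b1))
    have hUX' : U ≠ X := by
      intro h
      exact hno V U b1 havs hbb1 (h ▸ hzX : z U = z b1)
    obtain ⟨a', hmem, hda, hca, hsa, hent1, hent2⟩ :=
      oneMove (z := z) K a U V W X hUV (Ne.symm hWU) hUX' hVW' hVX' hWX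
        hzW.symm hav haWX
    refine ⟨a', b, hmem, by simp [Jdl, Ideal.zero_mem], hda, hca, fun _ => rfl,
      fun _ _ => rfl, by omega, V, X, b1, by omega, hbb1, hzX⟩

end Cases

section Advance
variable {n k : ℕ} {z : Fin n → Fin k}

lemma advance (K : Type*) [Field K] (a b : Edge n → ℕ)
    (hd : ∀ u, degSeqN a u = degSeqN b u)
    (hc : ∀ i j, colorSeqN z a i j = colorSeqN z b i j)
    (hdis : ∀ u v, entN a u v = 0 ∨ entN b u v = 0)
    (U V : Fin n) (hav : 0 < entN a U V) :
    ∃ a' b', (mono K a - mono K a' ∈ Jdl K n k z) ∧ (mono K b - mono K b' ∈ Jdl K n k z) ∧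
      (∀ p, degSeqN a' p = degSeqN a p) ∧ (∀ i j, colorSeqN z a' i j = colorSeqN z a i j) ∧
      (∀ p, degSeqN b' p = degSeqN b p) ∧ (∀ i j, colorSeqN z b' i j = colorSeqN z b i j) ∧
      ((∑ e, a' e) + (∑ e, b' e) = (∑ e, a e) + (∑ e, b e)) ∧
      (∃ p q, 0 < entN a' p q ∧ 0 < entN b' p q) := by
  by_cases hco : ∃ u v w, 0 < entN a u v ∧ 0 < entN b u w ∧ z v = z w
  · obtain ⟨u, v, w, h1, h2, h3⟩ := hco
    exact case1 K a b hd hdis u v w h1 h2 h3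
  · push_neg at hco
    have hno : ∀ u v w, 0 < entN a u v → 0 < entN b u w → z v ≠ z w := fun u v w p q =>
      hco u v w p q
    obtain ⟨a1, b1, m1a, m1b, d1a, c1a, d1b, c1b, t1, p, q, r, hpq, hpr, hzqr⟩ :=
      case2 K a b hd hc hdis hno U V hav
    by_cases hdis2 : ∀ u v, entN a1 u v = 0 ∨ entN b1 u v = 0
    · have hd1 : ∀ u, degSeqN a1 u = degSeqN b1 u := by
        intro u; rw [d1a, d1b, hd]
      obtain ⟨a2, b2, m2a, m2b, d2a, c2a, d2b, c2b, t2, hcom⟩ :=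
        case1 K a1 b1 hd1 hdis2 p q r hpq hpr hzqr
      refine ⟨a2, b2, ?_, ?_, ?_, ?_, ?_, ?_, by omega, hcom⟩
      · have : mono K a - mono K a2 = (mono K a - mono K a1) + (mono K a1 - mono K a2) := by
          ring
        rw [this]; exact Ideal.add_mem _ m1a m2a
      · have : mono K b - mono K b2 = (mono K b - mono K b1) + (mono K b1 - mono K b2) := by
          ring
        rw [this]; exact Ideal.add_mem _ m1b m2b
      · intro u'; rw [d2a, d1a]
      · intro i j; rw [c2a, c1a]
      · intro u'; rw [d2b, d1b]
      · intro i j; rw [c2b, c1b]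
    · push_neg at hdis2
      obtain ⟨u, v, h1, h2⟩ := hdis2
      exact ⟨a1, b1, m1a, m1b, d1a, c1a, d1b, c1b, t1, u, v, by omega, by omega⟩

lemma strip (K : Type*) [Field K] (a b : Edge n → ℕ)
    (hd : ∀ u, degSeqN a u = degSeqN b u)
    (hc : ∀ i j, colorSeqN z a i j = colorSeqN z b i j)
    (e0 : Edge n) (hae : 0 < a e0) (hbe : 0 < b e0)
    (hIH : ∀ a' b' : Edge n → ℕ, (∀ u, degSeqN a' u = degSeqN b' u) →
      (∀ i j, colorSeqN z a' i j = colorSeqN z b' i j) →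
      (∑ e, a' e) + (∑ e, b' e) + 2 ≤ (∑ e, a e) + (∑ e, b e) →
      mono K a' - mono K b' ∈ Jdl K n k z) :
    mono K a - mono K b ∈ Jdl K n k z := by
  set χ : Edge n → ℕ := chi e0.1.1 e0.1.2 (ne_of_lt e0.2) with hχ
  have hch : ∀ e, χ e = if e = e0 then 1 else 0 := by
    intro e; rw [hχ]; unfold chi; rw [ed_self]
  have hle_a : ∀ e, χ e ≤ a e := by
    intro e; rw [hch e]; split_ifs with hh
    · rw [hh]; omega
    · omega
  have hle_b : ∀ e, χ e ≤ b e := by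
    intro e; rw [hch e]; split_ifs with hh
    · rw [hh]; omega
    · omega
  set a0 : Edge n → ℕ := fun e => a e - χ e with ha0
  set b0 : Edge n → ℕ := fun e => b e - χ e with hb0
  have haeq : (fun e => a0 e + χ e) = a := by
    funext e; exact Nat.sub_add_cancel (hle_a e)
  have hbeq : (fun e => b0 e + χ e) = b := by
    funext e; exact Nat.sub_add_cancel (hle_b e)
  have hA : ∀ u, degSeqN a u = degSeqN a0 u + degSeqN χ u := by
    intro u; conv_lhs => rw [← haeq]
    exact degSeqN_add _ _ u
  have hB : ∀ u, degSeqN b u = degSeqN b0 u + degSeqN χ u := by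
    intro u; conv_lhs => rw [← hbeq]
    exact degSeqN_add _ _ u
  have hCA : ∀ i j, colorSeqN z a i j = colorSeqN z a0 i j + colorSeqN z χ i j := by
    intro i j; conv_lhs => rw [← haeq]
    exact colorSeqN_add z _ _ i j
  have hCB : ∀ i j, colorSeqN z b i j = colorSeqN z b0 i j + colorSeqN z χ i j := by
    intro i j; conv_lhs => rw [← hbeq]
    exact colorSeqN_add z _ _ i j
  have hSA : (∑ e, a e) = (∑ e, a0 e) + 1 := by
    conv_lhs => rw [← haeq]
    rw [sum_add_fn, hχ, sum_chi]
  have hSB : (∑ e, b e) = (∑ e, b0 e) + 1 := by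
    conv_lhs => rw [← hbeq]
    rw [sum_add_fn, hχ, sum_chi]
  have hmem0 : mono K a0 - mono K b0 ∈ Jdl K n k z := by
    apply hIH
    · intro u; have := hd u; have h1 := hA u; have h2 := hB u; omega
    · intro i j; have := hc i j; have h1 := hCA i j; have h2 := hCB i j; omega
    · omega
  have h1 : mono K a0 * mono K χ = mono K a := by rw [mono_mul, haeq]
  have h2 : mono K b0 * mono K χ = mono K b := by rw [mono_mul, hbeq]
  have : mono K a - mono K b = (mono K a0 - mono K b0) * mono K χ := by
    rw [sub_mul, h1, h2]
  rw [this]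
  exact Ideal.mul_mem_right _ _ hmem0

lemma partII (K : Type*) [Field K] (N : ℕ) :
    ∀ a b : Edge n → ℕ, (∀ u, degSeqN a u = degSeqN b u) →
      (∀ i j, colorSeqN z a i j = colorSeqN z b i j) →
      (∑ e, a e) + (∑ e, b e) ≤ N →
      mono K a - mono K b ∈ Jdl K n k z := by
  induction N using Nat.strong_induction_on with
  | _ N IH =>
  intro a b hd hc hN
  by_cases hab : a = b
  · rw [hab]; simp [Jdl, Ideal.zero_mem]
  have key : ∀ a' b' : Edge n → ℕ, (∀ u, degSeqN a' u = degSeqN b' u) →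
      (∀ i j, colorSeqN z a' i j = colorSeqN z b' i j) →
      (∑ e, a' e) + (∑ e, b' e) ≤ N →
      (∃ e0, 0 < a' e0 ∧ 0 < b' e0) →
      mono K a' - mono K b' ∈ Jdl K n k z := by
    intro a' b' hd' hc' hN' ⟨e0, hae, hbe⟩
    exact strip K a' b' hd' hc' e0 hae hbe (fun a'' b'' hd'' hc'' ht =>
      IH ((∑ e, a'' e) + (∑ e, b'' e)) (by omega) a'' b'' hd'' hc'' le_rfl)
  by_cases hcom : ∃ e0, 0 < a e0 ∧ 0 < b e0
  · exact key a b hd hc hN hcom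
  · -- disjoint supports
    have hdis0 : ∀ e, a e = 0 ∨ b e = 0 := by
      intro e
      by_contra hcon
      push_neg at hcon
      exact hcom ⟨e, by omega, by omega⟩
    have hdis : ∀ u v, entN a u v = 0 ∨ entN b u v = 0 := by
      intro u v; unfold entN
      split_ifs <;> first | exact hdis0 _ | exact Or.inl rfl
    obtain ⟨e1, hne⟩ := Function.ne_iff.mp hab
    rcases Nat.lt_or_ge 0 (a e1) with hpos | hz0
    · -- a side has an edge
      have hav : 0 < entN a e1.1.1 e1.1.2 := by rw [entN_edge]; exact hpos
      obtain ⟨a', b', ma, mb, da, ca, db, cb, ht, p, q, hpa, hpb⟩ :=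
        advance K a b hd hc hdis e1.1.1 e1.1.2 hav
      have hpq : p ≠ q := entN_pos_ne hpa
      have hmid : mono K a' - mono K b' ∈ Jdl K n k z := by
        apply key a' b'
        · intro u; rw [da, db, hd]
        · intro i j; rw [ca, cb, hc]
        · omega
        · exact ⟨ed p q hpq, by rwa [entN_ed hpq] at hpa, by rwa [entN_ed hpq] at hpb⟩
      have : mono K a - mono K b =
          (mono K a - mono K a') + (mono K a' - mono K b') - (mono K b - mono K b') := by
        ring
      rw [this]
      exact Ideal.sub_mem _ (Ideal.add_mem _ ma hmid) mb
    · -- b side has the edge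
      have hbpos : 0 < b e1 := by omega
      have hbv : 0 < entN b e1.1.1 e1.1.2 := by rw [entN_edge]; exact hbpos
      have hd' : ∀ u, degSeqN b u = degSeqN a u := fun u => (hd u).symm
      have hc' : ∀ i j, colorSeqN z b i j = colorSeqN z a i j := fun i j => (hc i j).symm
      have hdis' : ∀ u v, entN b u v = 0 ∨ entN a u v = 0 := fun u v => (hdis u v).symm
      obtain ⟨b', a', mb, ma, db, cb, da, ca, ht, p, q, hpb, hpa⟩ :=
        advance K b a hd' hc' hdis' e1.1.1 e1.1.2 hbv
      have hpq : p ≠ q := entN_pos_ne hpb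
      have hmid : mono K a' - mono K b' ∈ Jdl K n k z := by
        apply key a' b'
        · intro u; rw [da, db, hd]
        · intro i j; rw [ca, cb, hc]
        · omega
        · exact ⟨ed p q hpq, by rwa [entN_ed hpq] at hpa, by rwa [entN_ed hpq] at hpb⟩
      have : mono K a - mono K b =
          (mono K a - mono K a') + (mono K a' - mono K b') - (mono K b - mono K b') := by
        ring
      rw [this]
      exact Ideal.sub_mem _ (Ideal.add_mem _ ma hmid) mb
end Advance

section PartI
open MvPolynomial
variable {n k : ℕ} {z : Fin n → Fin k}

/-- exponent of the image of the variable `x_e` under `φ_β` -/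
noncomputable def wvec (z : Fin n → Fin k) (e : Edge n) : (Fin n ⊕ Fin k × Fin k) →₀ ℕ :=
  Finsupp.single (Sum.inl e.1.1) 1 + Finsupp.single (Sum.inl e.1.2) 1 +
    Finsupp.single (Sum.inr (min (z e.1.1) (z e.1.2), max (z e.1.1) (z e.1.2))) 1

/-- exponent of the image of `x^a` under `φ_β` -/
noncomputable def Wt (z : Fin n → Fin k) (a : Edge n → ℕ) : (Fin n ⊕ Fin k × Fin k) →₀ ℕ :=
  ∑ e, a e • wvec z e

lemma prod_monomial {K : Type*} [Field K] {ι σ : Type*} (s : Finset ι) (g : ι → (σ →₀ ℕ)) :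
    ∏ i ∈ s, MvPolynomial.monomial (g i) (1 : K) = MvPolynomial.monomial (∑ i ∈ s, g i) 1 := by
  classical
  induction s using Finset.induction with
  | empty => simp
  | insert _ _ hx ih =>
    rw [Finset.prod_insert hx, Finset.sum_insert hx, ih, MvPolynomial.monomial_mul, one_mul]

lemma phi_mono (K : Type*) [Field K] (a : Edge n → ℕ) :
    phiBeta K z (mono K a) = MvPolynomial.monomial (Wt z a) 1 := by
  unfold mono phiBeta
  rw [MvPolynomial.aeval_monomial, map_one, one_mul]
  rw [Finsupp.prod_fintype _ _ (fun e => pow_zero _)]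
  have hx : ∀ e : Edge n,
      (MvPolynomial.X (Sum.inl e.1.1) * MvPolynomial.X (Sum.inl e.1.2) *
        MvPolynomial.X (R := K)
          (Sum.inr (min (z e.1.1) (z e.1.2), max (z e.1.1) (z e.1.2)))) =
      MvPolynomial.monomial (wvec z e) 1 := by
    intro e
    rw [MvPolynomial.X, MvPolynomial.X, MvPolynomial.X, MvPolynomial.monomial_mul,
      MvPolynomial.monomial_mul, wvec]
    norm_num
  simp only [hx, Finsupp.coe_equivFunOnFinite_symm, MvPolynomial.monomial_pow, one_pow]
  rw [prod_monomial]
  rfl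

lemma entN_eq_sum (a : Edge n → ℕ) (u v : Fin n) :
    entN a u v =
      ∑ e : Edge n, if (e.1.1 = u ∧ e.1.2 = v) ∨ (e.1.1 = v ∧ e.1.2 = u) then a e else 0 := by
  rcases lt_trichotomy u v with h | h | h
  · rw [Finset.sum_eq_single (⟨(u, v), h⟩ : Edge n)]
    · rw [if_pos (Or.inl ⟨rfl, rfl⟩)]
      unfold entN; rw [dif_pos h]
    · intro e _ hne
      rw [if_neg]
      rintro (⟨h1, h2⟩ | ⟨h1, h2⟩)
      · exact hne (Subtype.ext (Prod.ext h1 h2))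
      · have := e.2; rw [h1, h2] at this; exact absurd h (asymm this)
    · intro h'; exact absurd (Finset.mem_univ _) h'
  · subst h
    rw [entN_self, Finset.sum_eq_zero]
    intro e _
    rw [if_neg]
    rintro (⟨h1, h2⟩ | ⟨h1, h2⟩) <;>
      · have := e.2; rw [h1, h2] at this; exact absurd this (lt_irrefl _)
  · rw [Finset.sum_eq_single (⟨(v, u), h⟩ : Edge n)]
    · rw [if_pos (Or.inr ⟨rfl, rfl⟩)]
      unfold entN; rw [dif_neg (asymm h), dif_pos h]
    · intro e _ hne
      rw [if_neg]
      rintro (⟨h1, h2⟩ | ⟨h1, h2⟩)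
      · have := e.2; rw [h1, h2] at this; exact absurd h (asymm this)
      · exact hne (Subtype.ext (Prod.ext h1 h2))
    · intro h'; exact absurd (Finset.mem_univ _) h'

lemma degSeqN_eq_sum (a : Edge n → ℕ) (u : Fin n) :
    degSeqN a u = ∑ e : Edge n,
      ((if e.1.1 = u then a e else 0) + (if e.1.2 = u then a e else 0)) := by
  unfold degSeqN
  simp only [entN_eq_sum a u]
  rw [Finset.sum_comm]
  apply Finset.sum_congr rfl
  intro e _
  have hlt := e.2
  by_cases h1 : e.1.1 = u <;> by_cases h2 : e.1.2 = u
  · exfalso; rw [h1, h2] at hlt; exact absurd hlt (lt_irrefl _)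
  · rw [if_pos h1, if_neg h2]
    have : ∀ v, ((e.1.1 = u ∧ e.1.2 = v) ∨ (e.1.1 = v ∧ e.1.2 = u)) ↔ v = e.1.2 := by
      intro v
      constructor
      · rintro (⟨-, hv⟩ | ⟨-, hv⟩)
        · exact hv.symm
        · exact absurd hv h2
      · rintro rfl; exact Or.inl ⟨h1, rfl⟩
    simp only [this]
    simp
  · rw [if_neg h1, if_pos h2]
    have : ∀ v, ((e.1.1 = u ∧ e.1.2 = v) ∨ (e.1.1 = v ∧ e.1.2 = u)) ↔ v = e.1.1 := by
      intro v
      constructor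
      · rintro (⟨hv, -⟩ | ⟨hv, -⟩)
        · exact absurd hv h1
        · exact hv.symm
      · rintro rfl; exact Or.inr ⟨rfl, h2⟩
    simp only [this]
    simp
  · rw [if_neg h1, if_neg h2]
    rw [Finset.sum_eq_zero]
    · simp
    intro v _
    rw [if_neg]
    rintro (⟨hv, -⟩ | ⟨-, hv⟩)
    · exact h1 hv
    · exact h2 hv

lemma Wt_inl (a : Edge n → ℕ) (u : Fin n) : Wt z a (Sum.inl u) = degSeqN a u := by
  unfold Wt
  rw [Finsupp.finset_sum_apply]
  rw [degSeqN_eq_sum]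
  apply Finset.sum_congr rfl
  intro e _
  rw [Finsupp.smul_apply, wvec, Finsupp.add_apply, Finsupp.add_apply,
    Finsupp.single_apply, Finsupp.single_apply, Finsupp.single_apply]
  simp only [Sum.inl.injEq, reduceCtorEq, if_false]
  by_cases h1 : e.1.1 = u <;> by_cases h2 : e.1.2 = u <;> simp [h1, h2] <;> omega

/-- color-pair count in min/max form -/
def mm (z : Fin n → Fin k) (a : Edge n → ℕ) (i j : Fin k) : ℕ :=
  ∑ e : Edge n,
    if (min (z e.1.1) (z e.1.2), max (z e.1.1) (z e.1.2)) = (i, j) then a e else 0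

lemma Wt_inr (a : Edge n → ℕ) (p : Fin k × Fin k) :
    Wt z a (Sum.inr p) = mm z a p.1 p.2 := by
  unfold Wt mm
  rw [Finsupp.finset_sum_apply]
  apply Finset.sum_congr rfl
  intro e _
  rw [Finsupp.smul_apply, wvec, Finsupp.add_apply, Finsupp.add_apply,
    Finsupp.single_apply, Finsupp.single_apply, Finsupp.single_apply]
  simp only [Sum.inr.injEq, reduceCtorEq, if_false]
  by_cases h : (min (z e.1.1) (z e.1.2), max (z e.1.1) (z e.1.2)) = (p.1, p.2)
  · rw [if_pos h, if_pos (by rw [h])]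
    simp
  · rw [if_neg h, if_neg (by rw [show p = (p.1, p.2) from rfl]; exact fun hh => h hh)]
    simp

lemma pair_eq_iff (x y i j : Fin k) :
    (min x y, max x y) = (min i j, max i j) ↔ (x = i ∧ y = j) ∨ (x = j ∧ y = i) := by
  constructor
  · intro h
    rw [Prod.mk.injEq] at h
    obtain ⟨hmin, hmax⟩ := h
    rcases le_total x y with h1 | h1 <;> rcases le_total i j with h2 | h2
    · rw [min_eq_left h1, min_eq_left h2] at hmin
      rw [max_eq_right h1, max_eq_right h2] at hmax
      exact Or.inl ⟨hmin, hmax⟩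
    · rw [min_eq_left h1, min_eq_right h2] at hmin
      rw [max_eq_right h1, max_eq_left h2] at hmax
      exact Or.inr ⟨hmin, hmax⟩
    · rw [min_eq_right h1, min_eq_left h2] at hmin
      rw [max_eq_left h1, max_eq_right h2] at hmax
      exact Or.inr ⟨hmax, hmin⟩
    · rw [min_eq_right h1, min_eq_right h2] at hmin
      rw [max_eq_left h1, max_eq_left h2] at hmax
      exact Or.inl ⟨hmax, hmin⟩
  · rintro (⟨rfl, rfl⟩ | ⟨rfl, rfl⟩)
    · rfl
    · rw [min_comm, max_comm]

lemma colorSeqN_eq_mm (a : Edge n → ℕ) (i j : Fin k) :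
    colorSeqN z a i j = mm z a (min i j) (max i j) := by
  unfold colorSeqN mm
  apply Finset.sum_congr rfl
  intro e _
  exact if_congr (by rw [pair_eq_iff]) rfl rfl |>.symm

lemma mm_eq_colorSeqN {i j : Fin k} (h : i ≤ j) (a : Edge n → ℕ) :
    mm z a i j = colorSeqN z a i j := by
  rw [colorSeqN_eq_mm, min_eq_left h, max_eq_right h]

lemma mm_eq_zero {i j : Fin k} (h : ¬ i ≤ j) (a : Edge n → ℕ) : mm z a i j = 0 := by
  unfold mm
  apply Finset.sum_eq_zero
  intro e _
  rw [if_neg]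
  intro hc
  rw [Prod.mk.injEq] at hc
  exact h (hc.1 ▸ hc.2 ▸ min_le_max)

lemma Wt_eq_iff (a b : Edge n → ℕ) :
    Wt z a = Wt z b ↔
      ((∀ u, degSeqN a u = degSeqN b u) ∧ ∀ i j, colorSeqN z a i j = colorSeqN z b i j) := by
  constructor
  · intro h
    constructor
    · intro u
      rw [← Wt_inl (z := z), ← Wt_inl (z := z), h]
    · intro i j
      have h1 := Wt_inr (z := z) a (min i j, max i j)
      have h2 := Wt_inr (z := z) b (min i j, max i j)
      dsimp only at h1 h2
      rw [colorSeqN_eq_mm, colorSeqN_eq_mm, ← h1, ← h2, h]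
  · rintro ⟨hd, hc⟩
    ext t
    rcases t with u | ⟨i, j⟩
    · rw [Wt_inl, Wt_inl, hd]
    · rw [Wt_inr, Wt_inr]
      by_cases hij : i ≤ j
      · rw [mm_eq_colorSeqN hij, mm_eq_colorSeqN hij, hc]
      · rw [mm_eq_zero hij, mm_eq_zero hij]
end PartI

section Final
open MvPolynomial
variable {n k : ℕ} {z : Fin n → Fin k}

lemma ent_split (γ : Edge n → ℤ) (u v : Fin n) :
    ent γ u v = ((entN (fun e => (γ e).toNat) u v : ℤ)
      - (entN (fun e => (-γ e).toNat) u v : ℤ)) := by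
  unfold ent entN
  split_ifs with h1 h2
  · dsimp only; omega
  · dsimp only; omega
  · simp

lemma phi_binom_zero (K : Type*) [Field K] (γ : Edge n → ℤ) (hγ : γ ∈ MSet z) :
    phiBeta K z (binom K γ) = 0 := by
  have hb : binom K γ = mono K (fun e => (γ e).toNat) - mono K (fun e => (-γ e).toNat) := rfl
  obtain ⟨⟨hdeg, hcol⟩, -⟩ := hγ
  have keyd : ∀ u, ((degSeqN (fun e => (γ e).toNat) u : ℤ)
      - (degSeqN (fun e => (-γ e).toNat) u : ℤ)) = degSeq γ u := by
    intro u
    unfold degSeqN degSeq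
    rw [Nat.cast_sum, Nat.cast_sum, ← Finset.sum_sub_distrib]
    exact Finset.sum_congr rfl fun v _ => (ent_split γ u v).symm
  have keyc : ∀ i j, ((colorSeqN z (fun e => (γ e).toNat) i j : ℤ)
      - (colorSeqN z (fun e => (-γ e).toNat) i j : ℤ)) = colorSeq z γ i j := by
    intro i j
    unfold colorSeqN colorSeq
    rw [Nat.cast_sum, Nat.cast_sum, ← Finset.sum_sub_distrib]
    apply Finset.sum_congr rfl
    intro e _
    split_ifs
    · dsimp only; omega
    · simp
  have hd : ∀ u, degSeqN (fun e => (γ e).toNat) u = degSeqN (fun e => (-γ e).toNat) u := by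
    intro u
    have h1 := keyd u
    rw [hdeg u] at h1
    omega
  have hc : ∀ i j, colorSeqN z (fun e => (γ e).toNat) i j
      = colorSeqN z (fun e => (-γ e).toNat) i j := by
    intro i j
    have h1 := keyc i j
    rw [hcol i j] at h1
    omega
  rw [hb, map_sub, phi_mono, phi_mono, (Wt_eq_iff _ _).mpr ⟨hd, hc⟩, sub_self]

lemma grouped_span {ι J M K : Type*} [DecidableEq J] [Field K] [AddCommGroup M] [Module K M]
    (v : ι → M) (q : ι → J) (s : Finset ι) (g : ι → K)
    (h : ∀ j, ∑ i ∈ s.filter (fun i => q i = j), g i = 0) :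
    (∑ i ∈ s, g i • v i) ∈
      Submodule.span K {x | ∃ i i', q i = q i' ∧ x = v i - v i'} := by
  classical
  induction s using Finset.strongInduction with
  | _ s ih =>
  rcases Finset.eq_empty_or_nonempty s with rfl | ⟨i0, hi0⟩
  · simp
  · rw [← Finset.sum_filter_add_sum_filter_not s (fun i => q i = q i0)]
    apply Submodule.add_mem
    · have hsum : ∑ i ∈ s.filter (fun i => q i = q i0), g i = 0 := h (q i0)
      have heq : ∑ i ∈ s.filter (fun i => q i = q i0), g i • v i
          = ∑ i ∈ s.filter (fun i => q i = q i0), g i • (v i - v i0) := by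
        simp only [smul_sub]
        rw [Finset.sum_sub_distrib, ← Finset.sum_smul, hsum, zero_smul, sub_zero]
      rw [heq]
      apply Submodule.sum_mem
      intro i hi
      exact Submodule.smul_mem _ _ (Submodule.subset_span
        ⟨i, i0, (Finset.mem_filter.mp hi).2, rfl⟩)
    · have hss : s.filter (fun i => ¬ q i = q i0) ⊂ s :=
        Finset.filter_ssubset.mpr ⟨i0, hi0, by simp⟩
      apply ih _ hss
      intro j
      by_cases hj : j = q i0
      · subst hj
        rw [Finset.filter_filter]
        rw [Finset.filter_false_of_mem (fun i _ => by tauto)]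
        simp
      · rw [Finset.filter_filter]
        have hfc : Finset.filter (fun i => ¬q i = q i0 ∧ q i = j) s
            = Finset.filter (fun i => q i = j) s := by
          apply Finset.filter_congr
          intro i _
          constructor
          · rintro ⟨-, h2⟩; exact h2
          · intro h2; exact ⟨fun hh => hj (h2.symm.trans hh), h2⟩
        rw [hfc]
        exact h j

end Final

/-- The toric ideal `I_{DC_{n,z}} = ker φ_β` equals the ideal generated by
the binomials `x^{γ⁺} − x^{γ⁻}` with `γ ∈ M_{n,z}`. -/
theorem toric_ideal_eq_span_quadratic_binomials (n k : ℕ) (hn : 0 < n) (hk : 0 < k)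
    (z : Fin n → Fin k) (K : Type*) [Field K] :
    Ideal.span {f : MvPolynomial (Edge n) K | ∃ γ ∈ MSet z, f = binom K γ} =
      RingHom.ker (phiBeta K z).toRingHom := by
  classical
  have hJ : Ideal.span {f : MvPolynomial (Edge n) K | ∃ γ ∈ MSet z, f = binom K γ}
      = Jdl K n k z := rfl
  rw [hJ]
  apply le_antisymm
  · rw [Jdl, Ideal.span_le]
    rintro f ⟨γ, hγ, rfl⟩
    have : phiBeta K z (binom K γ) = 0 := phi_binom_zero K γ hγ
    exact this
  · intro f hf
    rw [RingHom.mem_ker] at hf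
    have hf0 : phiBeta K z f = 0 := hf
    have hphi : phiBeta K z f
        = ∑ s ∈ f.support, MvPolynomial.monomial (Wt z (Finsupp.equivFunOnFinite s)) (MvPolynomial.coeff s f) := by
      conv_lhs => rw [MvPolynomial.as_sum f]
      rw [map_sum]
      apply Finset.sum_congr rfl
      intro s _
      have h1 : (MvPolynomial.monomial s) (MvPolynomial.coeff s f)
          = MvPolynomial.coeff s f • MvPolynomial.monomial s (1 : K) := by
        rw [MvPolynomial.smul_monomial, smul_eq_mul, mul_one]
      have h2 : MvPolynomial.monomial s (1 : K) = mono K (Finsupp.equivFunOnFinite s) := by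
        unfold mono; rw [Equiv.symm_apply_apply]
      rw [h1, map_smul, h2, phi_mono, MvPolynomial.smul_monomial, smul_eq_mul, mul_one]
    have hco : ∀ β, ∑ s ∈ f.support.filter (fun s => Wt z (Finsupp.equivFunOnFinite s) = β),
        MvPolynomial.coeff s f = 0 := by
      intro β
      have h2 := congrArg (MvPolynomial.coeff β) (hphi.symm.trans hf0)
      rw [MvPolynomial.coeff_sum, MvPolynomial.coeff_zero] at h2
      simp only [MvPolynomial.coeff_monomial] at h2
      rw [Finset.sum_filter]
      exact h2
    have hmem := grouped_span (K := K)
      (fun s : Edge n →₀ ℕ => MvPolynomial.monomial s (1 : K))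
      (fun s : Edge n →₀ ℕ => Wt z (Finsupp.equivFunOnFinite s)) f.support (fun s => MvPolynomial.coeff s f) hco
    have hfeq : f = ∑ s ∈ f.support,
        MvPolynomial.coeff s f • MvPolynomial.monomial s (1 : K) := by
      conv_lhs => rw [MvPolynomial.as_sum f]
      apply Finset.sum_congr rfl
      intro s _
      rw [MvPolynomial.smul_monomial, smul_eq_mul, mul_one]
    have h3 : f ∈ (Jdl K n k z).restrictScalars K := by
      rw [hfeq]
      refine Submodule.span_le.mpr ?_ hmem
      rintro x ⟨s, s', hq, rfl⟩
      have hst := (Wt_eq_iff (z := z) (Finsupp.equivFunOnFinite s) (Finsupp.equivFunOnFinite s')).mp hq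
      have hmm := partII (z := z) K ((∑ e, s e) + (∑ e, s' e)) (Finsupp.equivFunOnFinite s) (Finsupp.equivFunOnFinite s') hst.1 hst.2 le_rfl
      have e1 : mono K ((Finsupp.equivFunOnFinite s)) = MvPolynomial.monomial s (1 : K) := by
        unfold mono; rw [Equiv.symm_apply_apply]
      have e2 : mono K ((Finsupp.equivFunOnFinite s')) = MvPolynomial.monomial s' (1 : K) := by
        unfold mono; rw [Equiv.symm_apply_apply]
      rw [e1, e2] at hmm
      exact hmm
    exact h3
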